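/- Let z be a square-integrable real random variable with E[z²] = σ_z², let Δ₁, Δ₂ > 0, let 0 < α ≤ 1, and let u be uniformly distributed on [-Δ₁/2, Δ₁/2], independent of z. Then P( |α·z + u| > Δ₂/2 ) ≤ Δ₁²/(3Δ₂²) + 4α²σ_z²/Δ₂². Moreover, if |z| < (Δ₂ − Δ₁)/(2α) almost surely, then P( |α·z + u| > Δ₂/2 ) = 0. -/

import Mathlib

open MeasureTheory ProbabilityTheory

/-- The uniform probability distribution on the interval `[a, b]`. -/
noncomputable def uniformIcc (a b : ℝ) : Measure ℝ := volume[|Set.Icc a b]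

lemma uniformIcc_integral (a : ℝ) (ha : 0 < a) (f : ℝ → ℝ) :
    ∫ x, f x ∂(uniformIcc (-a) a) = (2 * a)⁻¹ * ∫ x in (-a)..a, f x := by
  rw [uniformIcc, ProbabilityTheory.cond, integral_smul_measure]
  have hab : (-a : ℝ) ≤ a := by linarith
  rw [Real.volume_Icc, integral_Icc_eq_integral_Ioc,
    ← intervalIntegral.integral_of_le hab]
  have : a - -a = 2 * a := by ring
  rw [this, ENNReal.toReal_inv, ENNReal.toReal_ofReal (by linarith)]
  simp [smul_eq_mul]

/-- **Decoding failure probability of nested dithered quantization (Theorem 4).**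
If `z` is square-integrable with `E[z²] = σ_z²` and the dither `u` is uniform on
`[-Δ₁/2, Δ₁/2]`, independent of `z`, then
`P(|αz + u| > Δ₂/2) ≤ Δ₁²/(3Δ₂²) + 4α²σ_z²/Δ₂²`; moreover, if `|z| < (Δ₂ − Δ₁)/(2α)`
almost surely, then this probability is `0`. -/
theorem nested_quantization_failure_probability
    {Ω : Type*} [MeasurableSpace Ω] (P : Measure Ω) [IsProbabilityMeasure P]
    (Δ₁ Δ₂ : ℝ) (hΔ₁ : 0 < Δ₁) (hΔ₂ : 0 < Δ₂)
    (α : ℝ) (hα0 : 0 < α) (hα1 : α ≤ 1)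
    (z u : Ω → ℝ) (hz : Measurable z) (hu : Measurable u)
    (hzL2 : MemLp z 2 P)
    (σz : ℝ) (hσz : (∫ ω, z ω ^ 2 ∂P) = σz ^ 2)
    (hindep : IndepFun z u P)
    (hulaw : Measure.map u P = uniformIcc (-(Δ₁ / 2)) (Δ₁ / 2)) :
    (P {ω | Δ₂ / 2 < |α * z ω + u ω|}).toReal
        ≤ Δ₁ ^ 2 / (3 * Δ₂ ^ 2) + 4 * α ^ 2 * σz ^ 2 / Δ₂ ^ 2 ∧
      ((∀ᵐ ω ∂P, |z ω| < (Δ₂ - Δ₁) / (2 * α)) →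
        P {ω | Δ₂ / 2 < |α * z ω + u ω|} = 0) := by
  have ha : (0:ℝ) < Δ₁ / 2 := by linarith
  -- a.e. bound on u
  have hub : ∀ᵐ ω ∂P, |u ω| ≤ Δ₁ / 2 := by
    have hmeas : MeasurableSet {x : ℝ | |x| ≤ Δ₁ / 2} :=
      (measurable_abs (measurableSet_Iic (a := Δ₁ / 2)))
    have h1 : ∀ᵐ x ∂(uniformIcc (-(Δ₁ / 2)) (Δ₁ / 2)), |x| ≤ Δ₁ / 2 := by
      rw [uniformIcc, ProbabilityTheory.cond]
      apply Measure.ae_smul_measure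
      filter_upwards [ae_restrict_mem measurableSet_Icc] with x hx
      exact abs_le.2 ⟨hx.1, hx.2⟩
    rw [← hulaw] at h1
    exact (ae_map_iff hu.aemeasurable hmeas).mp h1
  -- integrability facts
  have hz_int : Integrable z P := hzL2.integrable one_le_two
  have hz2_int : Integrable (fun ω => z ω ^ 2) P := hzL2.integrable_sq
  have huLtop : MemLp u ⊤ P :=
    memLp_top_of_bound hu.aestronglyMeasurable (Δ₁ / 2) hub
  have hu_int : Integrable u P := huLtop.integrable le_top
  have hu2_int : Integrable (fun ω => u ω ^ 2) P := by
    have : MemLp (fun ω => u ω ^ 2) ⊤ P := by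
      apply memLp_top_of_bound (hu.pow_const 2).aestronglyMeasurable ((Δ₁ / 2) ^ 2)
      filter_upwards [hub] with ω h
      rw [Real.norm_eq_abs, abs_pow]
      exact pow_le_pow_left₀ (abs_nonneg _) h 2
    exact this.integrable le_top
  have hzu_int : Integrable (z * u) P := hindep.integrable_mul hz_int hu_int
  -- moments of u
  have hEu : ∫ ω, u ω ∂P = 0 := by
    have : ∫ ω, u ω ∂P = ∫ x, x ∂(Measure.map u P) :=
      (integral_map hu.aemeasurable aestronglyMeasurable_id).symm
    rw [this, hulaw, uniformIcc_integral _ ha]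
    rw [integral_id]
    ring
  have hEu2 : ∫ ω, u ω ^ 2 ∂P = Δ₁ ^ 2 / 12 := by
    have : ∫ ω, u ω ^ 2 ∂P = ∫ x, x ^ 2 ∂(Measure.map u P) :=
      (integral_map hu.aemeasurable
        (measurable_id.pow_const 2).aestronglyMeasurable).symm
    rw [this, hulaw, uniformIcc_integral _ ha, integral_pow]
    have h : Δ₁ / 2 ≠ 0 := ne_of_gt ha
    field_simp
    ring
  have hEzu : ∫ ω, z ω * u ω ∂P = 0 := by
    have h1 := hindep.integral_mul_eq_mul_integral hz_int.aestronglyMeasurable hu_int.aestronglyMeasurable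
    have h2 : ∫ ω, z ω * u ω ∂P = integral P (z * u) := rfl
    rw [h2, h1, hEu, mul_zero]
  -- second moment of X = α z + u
  have hXint : Integrable (fun ω => (α * z ω + u ω) ^ 2) P := by
    have h : (fun ω => (α * z ω + u ω) ^ 2)
        = fun ω => α ^ 2 * z ω ^ 2 + (2 * α * (z ω * u ω) + u ω ^ 2) := by
      funext ω; ring
    rw [h]
    have hzu_int' : Integrable (fun ω => z ω * u ω) P := hzu_int
    exact (hz2_int.const_mul _).add
      (((hzu_int'.const_mul (2 * α)).add hu2_int))
  have hEX2 : ∫ ω, (α * z ω + u ω) ^ 2 ∂P = α ^ 2 * σz ^ 2 + Δ₁ ^ 2 / 12 := by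
    have h : (fun ω => (α * z ω + u ω) ^ 2)
        = fun ω => α ^ 2 * z ω ^ 2 + (2 * α * (z ω * u ω) + u ω ^ 2) := by
      funext ω; ring
    have hzu_int' : Integrable (fun ω => z ω * u ω) P := hzu_int
    have i1 : Integrable (fun ω => α ^ 2 * z ω ^ 2) P := hz2_int.const_mul _
    have i2 : Integrable (fun ω => 2 * α * (z ω * u ω)) P := hzu_int'.const_mul _
    have i3 : Integrable (fun ω => 2 * α * (z ω * u ω) + u ω ^ 2) P := i2.add hu2_int
    rw [h, integral_add i1 i3, integral_add i2 hu2_int]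
    rw [integral_const_mul, integral_const_mul, hσz, hEzu, hEu2]
    ring
  constructor
  · -- Markov / Chebyshev bound
    have hsub : {ω | Δ₂ / 2 < |α * z ω + u ω|}
        ⊆ {ω | (Δ₂ / 2) ^ 2 ≤ (α * z ω + u ω) ^ 2} := by
      intro ω hω
      have h1 : Δ₂ / 2 < |α * z ω + u ω| := hω
      have : (Δ₂ / 2) ^ 2 ≤ |α * z ω + u ω| ^ 2 := by
        apply pow_le_pow_left₀ (by linarith) h1.le
      rwa [sq_abs] at this
    have hmark := mul_meas_ge_le_integral_of_nonneg
      (ae_of_all P (fun ω => sq_nonneg (α * z ω + u ω))) hXint ((Δ₂ / 2) ^ 2)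
    have hmono : (P {ω | Δ₂ / 2 < |α * z ω + u ω|}).toReal
        ≤ (P {ω | (Δ₂ / 2) ^ 2 ≤ (α * z ω + u ω) ^ 2}).toReal := by
      apply ENNReal.toReal_mono (measure_ne_top _ _)
      exact measure_mono hsub
    have hc : (0:ℝ) < (Δ₂ / 2) ^ 2 := by positivity
    have key : (Δ₂ / 2) ^ 2 * (P {ω | Δ₂ / 2 < |α * z ω + u ω|}).toReal
        ≤ α ^ 2 * σz ^ 2 + Δ₁ ^ 2 / 12 := by
      calc (Δ₂ / 2) ^ 2 * (P {ω | Δ₂ / 2 < |α * z ω + u ω|}).toReal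
          ≤ (Δ₂ / 2) ^ 2 * (P {ω | (Δ₂ / 2) ^ 2 ≤ (α * z ω + u ω) ^ 2}).toReal := by
            gcongr
        _ ≤ ∫ ω, (α * z ω + u ω) ^ 2 ∂P := hmark
        _ = _ := hEX2
    have := (le_div_iff₀' hc).2 key
    refine this.trans (le_of_eq ?_)
    field_simp
    ring
  · -- a.s. bound case
    intro hzb
    have hae : ∀ᵐ ω ∂P, ¬ (Δ₂ / 2 < |α * z ω + u ω|) := by
      filter_upwards [hzb, hub] with ω h1 h2
      push_neg
      refine le_of_lt ?_
      calc |α * z ω + u ω| ≤ |α * z ω| + |u ω| := abs_add_le _ _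
        _ = α * |z ω| + |u ω| := by rw [abs_mul, abs_of_pos hα0]
        _ < α * ((Δ₂ - Δ₁) / (2 * α)) + Δ₁ / 2 := by
            have := abs_nonneg (u ω)
            have h3 : α * |z ω| < α * ((Δ₂ - Δ₁) / (2 * α)) :=
              (mul_lt_mul_iff_right₀ hα0).2 h1
            linarith
        _ = Δ₂ / 2 := by field_simp; ring
    rw [ae_iff] at hae
    simp only [not_not] at hae
    exact hae
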